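/- arXiv:2211.10509 — 2 statements merged into one kernel-verified Lean document; each statement's English description precedes it below -/
import Mathlib

section
/- Let W be an integrable real random variable with continuous distribution function, and α ∈ (0,1). Then the expected shortfall ES_α = (1/α)·E[W·1_{W ≤ w*}], where w* satisfies P(W ≤ w*) = α, equals sup over real x of { x + (1/α)·E[min(W - x, 0)] }, and the supremum is attained at x = w*. -/
open MeasureTheory

/-- Rockafellar–Uryasev representation of expected shortfall: with
`P(W ≤ w*) = α`, the expected shortfall `(1/α)·E[W·1_{W ≤ w*}]` equals
`⨆ x, x + (1/α)·E[min(W - x, 0)]`, and the supremum is attained at `x = w*`. -/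
theorem expected_shortfall_rockafellar_uryasev
    {Ω : Type*} [MeasurableSpace Ω] (μ : Measure Ω) [IsProbabilityMeasure μ]
    (W : Ω → ℝ) (hWmeas : Measurable W) (hWint : Integrable W μ)
    (hcont : Continuous fun x : ℝ => (μ {ω | W ω ≤ x}).toReal)
    (α : ℝ) (hα0 : 0 < α) (hα1 : α < 1)
    (wstar : ℝ) (hw : μ {ω | W ω ≤ wstar} = ENNReal.ofReal α) :
    ((1 / α) * ∫ ω in {ω | W ω ≤ wstar}, W ω ∂μ =
        ⨆ x : ℝ, (x + (1 / α) * ∫ ω, min (W ω - x) 0 ∂μ)) ∧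
    ((1 / α) * ∫ ω in {ω | W ω ≤ wstar}, W ω ∂μ =
        wstar + (1 / α) * ∫ ω, min (W ω - wstar) 0 ∂μ) := by
  have hα : α ≠ 0 := ne_of_gt hα0
  set S := {ω | W ω ≤ wstar} with hS
  have hSmeas : MeasurableSet S := measurableSet_le hWmeas measurable_const
  have hμS : (μ S).toReal = α := by rw [hw, ENNReal.toReal_ofReal hα0.le]
  have hint : ∀ x : ℝ, Integrable (fun ω => min (W ω - x) 0) μ := by
    intro x
    exact (hWint.sub (integrable_const x)).inf (integrable_const 0)
  -- value at wstar
  have heq : (fun ω => min (W ω - wstar) 0) = S.indicator (fun ω => W ω - wstar) := by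
    funext ω
    by_cases h : ω ∈ S
    · have h' : W ω ≤ wstar := h
      simp [Set.indicator_of_mem h, min_eq_left (sub_nonpos.mpr h')]
    · have h' : wstar < W ω := lt_of_not_ge h
      simp [Set.indicator_of_notMem h, min_eq_right (sub_nonneg.mpr h'.le)]
  have hconst : ∫ _ω in S, wstar ∂μ = α * wstar := by
    rw [setIntegral_const, measureReal_def, hμS, smul_eq_mul]
  have hI : ∫ ω, min (W ω - wstar) 0 ∂μ = (∫ ω in S, W ω ∂μ) - wstar * α := by
    rw [heq, integral_indicator hSmeas,
      integral_sub hWint.restrict (integrable_const _), hconst]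
    ring
  have h2 : (1 / α) * ∫ ω in S, W ω ∂μ
      = wstar + (1 / α) * ∫ ω, min (W ω - wstar) 0 ∂μ := by
    rw [hI]; field_simp; ring
  -- pointwise inequality
  have hptw : ∀ x : ℝ, ∀ ω, min (W ω - x) 0
      ≤ min (W ω - wstar) 0 + S.indicator (fun _ => wstar - x) ω := by
    intro x ω
    by_cases h : ω ∈ S
    · have h' : W ω ≤ wstar := h
      rw [Set.indicator_of_mem h, min_eq_left (sub_nonpos.mpr h')]
      have := min_le_left (W ω - x) 0
      linarith
    · have h' : wstar < W ω := lt_of_not_ge h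
      rw [Set.indicator_of_notMem h, min_eq_right (sub_nonneg.mpr h'.le)]
      simp [min_le_right (W ω - x) 0]
  have hind : ∀ x : ℝ, ∫ ω, S.indicator (fun _ => wstar - x) ω ∂μ = (wstar - x) * α := by
    intro x
    rw [integral_indicator hSmeas, setIntegral_const, measureReal_def, hμS, smul_eq_mul]
    ring
  have key : ∀ x : ℝ, x + (1 / α) * ∫ ω, min (W ω - x) 0 ∂μ
      ≤ wstar + (1 / α) * ∫ ω, min (W ω - wstar) 0 ∂μ := by
    intro x
    have h1 : ∫ ω, min (W ω - x) 0 ∂μ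
        ≤ ∫ ω, (min (W ω - wstar) 0 + S.indicator (fun _ => wstar - x) ω) ∂μ :=
      integral_mono (hint x)
        ((hint wstar).add ((integrable_const _).indicator hSmeas)) (hptw x)
    rw [integral_add (hint wstar) ((integrable_const _).indicator hSmeas), hind x] at h1
    calc x + (1 / α) * ∫ ω, min (W ω - x) 0 ∂μ
        ≤ x + (1 / α) * (∫ ω, min (W ω - wstar) 0 ∂μ + (wstar - x) * α) := by
          have : (0:ℝ) ≤ 1 / α := by positivity
          nlinarith [mul_le_mul_of_nonneg_left h1 this]
      _ = wstar + (1 / α) * ∫ ω, min (W ω - wstar) 0 ∂μ := by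
          field_simp; ring
  have hbdd : BddAbove (Set.range fun x : ℝ =>
      x + (1 / α) * ∫ ω, min (W ω - x) 0 ∂μ) := by
    refine ⟨wstar + (1 / α) * ∫ ω, min (W ω - wstar) 0 ∂μ, ?_⟩
    rintro y ⟨x, rfl⟩
    exact key x
  have hsup : (⨆ x : ℝ, (x + (1 / α) * ∫ ω, min (W ω - x) 0 ∂μ))
      = wstar + (1 / α) * ∫ ω, min (W ω - wstar) 0 ∂μ :=
    le_antisymm (ciSup_le key) (le_ciSup hbdd wstar)
  exact ⟨h2.trans hsup.symm, h2⟩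
end

section
/- For an integrable random variable W and α ∈ (0,1), the function h(x) = x + (1/α)·E[min(W - x, 0)] satisfies h(x) → -∞ as x → +∞ and h(x) is bounded above; in particular sup_x h(x) is finite. -/
open MeasureTheory Filter

/-- The Rockafellar–Uryasev objective `h(x) = x + (1/α)·E[min(W - x, 0)]`
tends to `-∞` as `x → +∞` and is bounded above; in particular its supremum
is finite. -/
theorem rockafellar_uryasev_objective_coercive
    {Ω : Type*} [MeasurableSpace Ω] (μ : Measure Ω) [IsProbabilityMeasure μ]
    (W : Ω → ℝ) (hWint : Integrable W μ)
    (α : ℝ) (hα0 : 0 < α) (hα1 : α < 1) :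
    Tendsto (fun x : ℝ => x + (1 / α) * ∫ ω, min (W ω - x) 0 ∂μ) atTop atBot ∧
    BddAbove (Set.range fun x : ℝ => x + (1 / α) * ∫ ω, min (W ω - x) 0 ∂μ) := by
  have hsub : ∀ x : ℝ, Integrable (fun ω => W ω - x) μ :=
    fun x => hWint.sub (integrable_const x)
  have hmin : ∀ x : ℝ, Integrable (fun ω => min (W ω - x) 0) μ := by
    intro x
    have := (hsub x).inf (integrable_const (0 : ℝ))
    exact this
  have hα : 0 < 1 / α := by positivity
  -- integral of min is ≤ 0
  have hI0 : ∀ x : ℝ, (∫ ω, min (W ω - x) 0 ∂μ) ≤ 0 := by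
    intro x
    exact integral_nonpos (fun ω => min_le_right _ _)
  -- integral of min is ≤ ∫ W - x
  have hI1 : ∀ x : ℝ, (∫ ω, min (W ω - x) 0 ∂μ) ≤ (∫ ω, W ω ∂μ) - x := by
    intro x
    have : (∫ ω, min (W ω - x) 0 ∂μ) ≤ ∫ ω, W ω - x ∂μ :=
      integral_mono (hmin x) (hsub x) (fun ω => min_le_left _ _)
    simpa [integral_sub hWint (integrable_const x)] using this
  set c : ℝ := ∫ ω, W ω ∂μ
  have hbound : ∀ x : ℝ, x + (1 / α) * ∫ ω, min (W ω - x) 0 ∂μ ≤ x + (1 / α) * (c - x) := by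
    intro x
    have := mul_le_mul_of_nonneg_left (hI1 x) hα.le
    linarith
  constructor
  · apply tendsto_atBot_mono hbound
    have h1 : (fun x : ℝ => x + (1 / α) * (c - x)) =
        fun x : ℝ => (1 - 1 / α) * x + (1 / α) * c := by
      funext x; ring
    rw [h1]
    have hneg : 1 - 1 / α < 0 := by
      have : 1 < 1 / α := (one_lt_one_div hα0 hα1)
      linarith
    exact (tendsto_atBot_add_const_right _ _
      ((tendsto_const_mul_atBot_of_neg hneg).mpr tendsto_id))
  · refine ⟨max c c, ?_⟩
    rintro y ⟨x, rfl⟩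
    simp only [max_self]
    rcases le_total x c with hx | hx
    · have := mul_nonpos_of_nonneg_of_nonpos hα.le (hI0 x)
      linarith
    · have h2 := hbound x
      have h3 : (1 / α) * (c - x) ≤ c - x := by
        have : 1 ≤ 1 / α := le_of_lt ((one_lt_one_div hα0 hα1))
        nlinarith
      linarith
end
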